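/- For every n ≥ 1, the set F_n of points mapped by f^n to a fixed point of f equals { (k + κ)/2^{n-1} : 0 ≤ k < 2^{n-1}, κ ∈ {0, 1/3, 2/3} } ∪ {1}. -/

import Mathlib

noncomputable def tent (x : ℝ) : ℝ := 1 - |2 * x - 1|

lemma tent_left {x : ℝ} (h : x ≤ 1/2) : tent x = 2 * x := by
  unfold tent; rw [abs_of_nonpos (by linarith)]; ring

lemma tent_right {x : ℝ} (h : 1/2 ≤ x) : tent x = 2 - 2 * x := by
  unfold tent; rw [abs_of_nonneg (by linarith)]; ring

lemma tent_mem {x : ℝ} (hx : x ∈ Set.Icc (0:ℝ) 1) : tent x ∈ Set.Icc (0:ℝ) 1 := by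
  obtain ⟨h0, h1⟩ := hx
  rcases le_total x (1/2) with h | h
  · rw [tent_left h]; constructor <;> linarith
  · rw [tent_right h]; constructor <;> linarith

def tentS (n : ℕ) : Set ℝ :=
  {x : ℝ | ∃ k : ℕ, k < 2 ^ n ∧ ∃ κ ∈ ({0, 1/3, 2/3} : Set ℝ), x = ((k : ℝ) + κ) / 2 ^ n} ∪ {1}

lemma tent_main (n : ℕ) :
    {x : ℝ | x ∈ Set.Icc (0:ℝ) 1 ∧ tent^[n+1] x ∈ ({0, 2/3} : Set ℝ)} = tentS n := by
  induction n with
  | zero =>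
    ext x
    simp only [tentS, Set.mem_setOf_eq, Set.mem_union, Set.mem_singleton_iff,
      Set.mem_insert_iff, Set.mem_Icc, zero_add, Function.iterate_one, pow_zero, pow_one]
    constructor
    · rintro ⟨⟨h0, h1⟩, h⟩
      rcases le_total x (1/2) with hx | hx
      · rw [tent_left hx] at h
        rcases h with h | h
        · left; exact ⟨0, by norm_num, 0, by norm_num, by push_cast; linarith⟩
        · left; exact ⟨0, by norm_num, 1/3, by norm_num, by push_cast; linarith⟩
      · rw [tent_right hx] at h
        rcases h with h | h
        · right; linarith
        · left; exact ⟨0, by norm_num, 2/3, by norm_num, by push_cast; linarith⟩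
    · rintro (⟨k, hk, κ, hκ, rfl⟩ | rfl)
      · interval_cases k
        rcases hκ with rfl | rfl | rfl
        · refine ⟨by norm_num, ?_⟩
          rw [tent_left (by norm_num)]; norm_num
        · refine ⟨by norm_num, ?_⟩
          rw [tent_left (by norm_num)]; norm_num
        · refine ⟨by norm_num, ?_⟩
          rw [tent_right (by norm_num)]; norm_num
      · refine ⟨by norm_num, ?_⟩
        rw [tent_right (by norm_num)]; norm_num
  | succ n ih =>
    have hp : (0:ℝ) < 2 ^ n := by positivity
    have hp1 : (0:ℝ) < 2 ^ (n+1) := by positivity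
    have hN : 0 < 2 ^ n := Nat.two_pow_pos n
    rw [Set.ext_iff] at ih
    ext x
    simp only [Set.mem_setOf_eq, Function.iterate_succ_apply]
    constructor
    · rintro ⟨hx, hfix⟩
      have htx : tent x ∈ tentS n := (ih (tent x)).mp ⟨tent_mem hx, hfix⟩
      rcases htx with ⟨k, hk, κ, hκ, heq⟩ | h1
      · rcases le_total x (1/2) with hx2 | hx2
        · rw [tent_left hx2] at heq
          left
          exact ⟨k, by omega, κ, hκ, by
            rw [pow_succ]; field_simp at heq ⊢; linarith⟩
        · rw [tent_right hx2] at heq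
          have hkR : ((k:ℝ)) < 2 ^ n := by exact_mod_cast hk
          rcases hκ with rfl | rfl | rfl
          · rcases Nat.eq_zero_or_pos k with rfl | hk0
            · right
              simp only [Set.mem_singleton_iff]
              push_cast at heq
              field_simp at heq; nlinarith
            · left
              refine ⟨2 ^ (n+1) - k, by omega, 0, by norm_num, ?_⟩
              rw [Nat.cast_sub (by omega)]
              push_cast
              rw [pow_succ] at *
              field_simp at heq ⊢; linarith
          · left
            refine ⟨2 ^ (n+1) - k - 1, by omega, 2/3, by norm_num, ?_⟩
            rw [Nat.cast_sub (by omega), Nat.cast_sub (by omega)]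
            push_cast
            rw [pow_succ] at *
            field_simp at heq ⊢; linarith
          · left
            refine ⟨2 ^ (n+1) - k - 1, by omega, 1/3, by norm_num, ?_⟩
            rw [Nat.cast_sub (by omega), Nat.cast_sub (by omega)]
            push_cast
            rw [pow_succ] at *
            field_simp at heq ⊢; linarith
      · -- tent x = 1, so x = 1/2
        simp only [Set.mem_singleton_iff] at h1
        have hx12 : x = 1/2 := by
          rcases le_total x (1/2) with hx2 | hx2
          · rw [tent_left hx2] at h1; linarith
          · rw [tent_right hx2] at h1; linarith
        left
        refine ⟨2 ^ n, by omega, 0, by norm_num, ?_⟩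
        push_cast
        rw [hx12, pow_succ]
        field_simp; ring
    · intro hx
      suffices h : x ∈ Set.Icc (0:ℝ) 1 ∧ tent x ∈ tentS n by
        exact ⟨h.1, ((ih (tent x)).mpr h.2).2⟩
      rcases hx with ⟨k, hk, κ, hκ, rfl⟩ | h1
      · have hkR : ((k:ℝ)) + 1 ≤ 2 ^ (n+1) := by exact_mod_cast Nat.succ_le_of_lt hk
        have hκ0 : 0 ≤ κ := by rcases hκ with rfl | rfl | rfl <;> norm_num
        have hκ1 : κ ≤ 2/3 := by rcases hκ with rfl | rfl | rfl <;> norm_num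
        have hIcc : ((k:ℝ) + κ) / 2 ^ (n+1) ∈ Set.Icc (0:ℝ) 1 := by
          constructor
          · positivity
          · rw [div_le_one hp1]; linarith
        refine ⟨hIcc, ?_⟩
        rcases lt_or_ge k (2 ^ n) with hkn | hkn
        · have hkRn : ((k:ℝ)) + 1 ≤ 2 ^ n := by exact_mod_cast Nat.succ_le_of_lt hkn
          have hle : ((k:ℝ) + κ) / 2 ^ (n+1) ≤ 1/2 := by
            rw [div_le_iff₀ hp1, pow_succ]; nlinarith
          left
          refine ⟨k, hkn, κ, hκ, ?_⟩
          rw [tent_left hle, pow_succ]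
          field_simp
        · have hkRn : (2:ℝ) ^ n ≤ (k:ℝ) := by exact_mod_cast hkn
          rcases hκ with rfl | rfl | rfl
          · rcases eq_or_lt_of_le hkn with hke | hke
            · -- k = 2^n, κ = 0 : x = 1/2, tent x = 1
              right
              simp only [Set.mem_singleton_iff]
              have hks : (k:ℝ) = 2 ^ n := by exact_mod_cast hke.symm
              have hx12 : ((k:ℝ) + 0) / 2 ^ (n+1) = 1/2 := by
                rw [hks, pow_succ, div_eq_iff (by positivity)]; ring
              rw [hx12, tent_left (le_refl _)]; norm_num
            · have hge : (1:ℝ)/2 ≤ ((k:ℝ) + 0) / 2 ^ (n+1) := by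
                have : (2:ℝ) ^ n + 1 ≤ (k:ℝ) := by exact_mod_cast hke
                rw [le_div_iff₀ hp1, pow_succ]; nlinarith
              left
              refine ⟨2 ^ (n+1) - k, by omega, 0, by norm_num, ?_⟩
              rw [tent_right hge, Nat.cast_sub (by omega)]
              push_cast
              rw [pow_succ]
              field_simp; ring
          · have hge' : (1:ℝ)/2 ≤ ((k:ℝ) + 1/3) / 2 ^ (n+1) := by
              rw [le_div_iff₀ hp1, pow_succ]; nlinarith
            left
            refine ⟨2 ^ (n+1) - k - 1, by omega, 2/3, by norm_num, ?_⟩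
            rw [tent_right hge', Nat.cast_sub (by omega), Nat.cast_sub (by omega)]
            push_cast
            rw [pow_succ]
            field_simp; ring
          · have hge' : (1:ℝ)/2 ≤ ((k:ℝ) + 2/3) / 2 ^ (n+1) := by
              rw [le_div_iff₀ hp1, pow_succ]; nlinarith
            left
            refine ⟨2 ^ (n+1) - k - 1, by omega, 1/3, by norm_num, ?_⟩
            rw [tent_right hge', Nat.cast_sub (by omega), Nat.cast_sub (by omega)]
            push_cast
            rw [pow_succ]
            field_simp; ring
      · simp only [Set.mem_singleton_iff] at h1
        subst h1
        refine ⟨by norm_num, ?_⟩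
        left
        refine ⟨0, by positivity, 0, by norm_num, ?_⟩
        rw [tent_right (by norm_num)]
        norm_num

theorem tent_preimage_fixed_points (n : ℕ) (hn : 1 ≤ n) :
    {x : ℝ | x ∈ Set.Icc (0:ℝ) 1 ∧ tent^[n] x ∈ ({0, 2/3} : Set ℝ)} =
      {x : ℝ | ∃ k : ℕ, k < 2 ^ (n - 1) ∧
        ∃ κ ∈ ({0, 1/3, 2/3} : Set ℝ), x = ((k : ℝ) + κ) / 2 ^ (n - 1)} ∪ {1} := by
  obtain ⟨m, rfl⟩ : ∃ m, n = m + 1 := ⟨n - 1, by omega⟩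
  simpa [tentS] using tent_main m
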